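/- Let ζ > 2/3 and suppose q_1, …, q_n are probability vectors in R^K such that consecutive vectors are adjacent: q_t^T q_{t+1} ≥ ζ for all t. Then all q_t share a common argmax index; in particular q_1 and q_n have the same argmax index. -/
import Mathlib

open Finset

lemma step19 {K : ℕ} (p q : Fin K → ℝ) (ζ : ℝ) (hζ : 2/3 < ζ)
    (hp0 : ∀ l, 0 ≤ p l) (hp1 : ∑ l, p l = 1)
    (hq0 : ∀ l, 0 ≤ q l) (hq1 : ∑ l, q l = 1)
    (hip : ζ ≤ ∑ l, p l * q l)
    (i : Fin K) (hi : ∀ l, p l ≤ p i) : ∀ l, q l ≤ q i := by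
  have hK : 0 < K := by
    rcases Nat.eq_zero_or_pos K with h | h
    · exfalso; subst h; simp at hp1
    · exact h
  -- p i ≥ ζ
  have hpi : ζ ≤ p i := by
    calc ζ ≤ ∑ l, p l * q l := hip
    _ ≤ ∑ l, p i * q l := Finset.sum_le_sum fun l _ =>
        mul_le_mul_of_nonneg_right (hi l) (hq0 l)
    _ = p i * ∑ l, q l := by rw [Finset.mul_sum]
    _ = p i := by rw [hq1, mul_one]
  have hple1 : ∀ l : Fin K, p l ≤ 1 := fun l =>
    hp1 ▸ Finset.single_le_sum (fun m _ => hp0 m) (mem_univ l)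
  have hqle1 : ∀ l : Fin K, q l ≤ 1 := fun l =>
    hq1 ▸ Finset.single_le_sum (fun m _ => hq0 m) (mem_univ l)
  -- q i ≥ 2ζ - 1
  have hqi : 2 * ζ - 1 ≤ q i := by
    have hsplit : ∑ l, p l * q l = p i * q i + ∑ l ∈ univ.erase i, p l * q l :=
      (Finset.add_sum_erase univ (fun l => p l * q l) (mem_univ i)).symm
    have h2 : ∑ l ∈ univ.erase i, p l * q l ≤ ∑ l ∈ univ.erase i, p l :=
      Finset.sum_le_sum fun l _ => mul_le_of_le_one_right (hp0 l) (hqle1 l)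
    have h3 : ∑ l ∈ univ.erase i, p l = 1 - p i := by
      rw [Finset.sum_erase_eq_sub (mem_univ i), hp1]
    have h4 : p i * q i ≤ q i := mul_le_of_le_one_left (hq0 i) (hple1 i)
    have : ζ ≤ q i + (1 - p i) := by
      calc ζ ≤ ∑ l, p l * q l := hip
      _ = p i * q i + ∑ l ∈ univ.erase i, p l * q l := hsplit
      _ ≤ q i + (1 - p i) := by rw [← h3]; exact add_le_add h4 h2
    nlinarith [hpi]
  -- pick a maximizer j of q
  obtain ⟨j, -, hj⟩ := Finset.exists_max_image (univ : Finset (Fin K)) q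
    (univ_nonempty_iff.mpr (Fin.pos_iff_nonempty.mp hK))
  have hqj : ζ ≤ q j := by
    calc ζ ≤ ∑ l, p l * q l := hip
    _ ≤ ∑ l, p l * q j := Finset.sum_le_sum fun l _ =>
        mul_le_mul_of_nonneg_left (hj l (mem_univ l)) (hp0 l)
    _ = (∑ l, p l) * q j := by rw [Finset.sum_mul]
    _ = q j := by rw [hp1, one_mul]
  by_cases hij : i = j
  · intro l; rw [hij]; exact hj l (mem_univ l)
  · exfalso
    have : q i ≤ 1 - q j := by
      have := Finset.single_le_sum (f := q) (fun m _ => hq0 m)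
        (Finset.mem_erase.mpr ⟨hij, mem_univ i⟩)
      rw [Finset.sum_erase_eq_sub (mem_univ j), hq1] at this
      linarith
    linarith

theorem stmt19 (K n : ℕ) (hn : 1 ≤ n) (q : ℕ → Fin K → ℝ) (ζ : ℝ) (hζ : 2/3 < ζ)
    (h0 : ∀ t, t < n → ∀ l, 0 ≤ q t l)
    (h1 : ∀ t, t < n → ∑ l, q t l = 1)
    (hadj : ∀ t, t + 1 < n → ζ ≤ ∑ l, q t l * q (t + 1) l) :
    ∃ η : Fin K, ∀ t, t < n → ∀ l, q t l ≤ q t η := by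
  have hK : 0 < K := by
    rcases Nat.eq_zero_or_pos K with h | h
    · exfalso; have := h1 0 hn; subst h; simp at this
    · exact h
  obtain ⟨i, -, hi⟩ := Finset.exists_max_image (univ : Finset (Fin K)) (q 0)
    (Finset.univ_nonempty_iff.mpr (Fin.pos_iff_nonempty.mp hK))
  refine ⟨i, ?_⟩
  intro t
  induction t with
  | zero => exact fun _ l => hi l (Finset.mem_univ l)
  | succ s ih =>
    intro hs
    have hsn : s < n := Nat.lt_of_succ_lt hs
    exact step19 (q s) (q (s+1)) ζ hζ (h0 s hsn) (h1 s hsn) (h0 (s+1) hs)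
      (h1 (s+1) hs) (hadj s hs) i (ih hsn)
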